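/- Locality of the principal part of an analytic regularization: let λ ∈ ℕ₀, let Ω ⊆ ℂ be a neighborhood of 0, and let {t^ζ}_{ζ ∈ Ω∖{0}} be a family of tempered distributions on ℝⁿ such that for each Schwartz function f the map ζ ↦ ⟨t^ζ, f⟩ is analytic on Ω∖{0} with a pole of finite order at 0, and such that lim_{ζ→0} ⟨t^ζ, g⟩ exists for every Schwartz function g with ∂^α g(0) = 0 for all |α| ≤ λ. Then each coefficient of a strictly negative power of ζ in the Laurent expansion of ζ ↦ ⟨t^ζ, ·⟩ is a distribution supported at the origin, i.e. a finite linear combination of derivatives ∂^α δ of the Dirac distribution at 0 with |α| ≤ λ. -/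

import Mathlib

open Filter Topology

/-- The multi-index derivative `∂^α` on Schwartz space: for each `j`,
differentiate `α j` times in the `j`-th coordinate direction. -/
noncomputable def schwartzMDeriv {n : ℕ} (α : Fin n → ℕ)
    (f : SchwartzMap (Fin n → ℝ) ℂ) : SchwartzMap (Fin n → ℝ) ℂ :=
  (List.finRange n).foldr
    (fun j g => (fun h => LineDeriv.lineDerivOpCLM ℝ (SchwartzMap (Fin n → ℝ) ℂ) (Pi.single j 1 : Fin n → ℝ) h)^[α j] g) f

/-- The finite set of multi-indices `α` with `|α| = Σⱼ αⱼ ≤ m`. -/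
noncomputable def multiIndices (n m : ℕ) : Finset (Fin n → ℕ) :=
  (Fintype.piFinset fun _ : Fin n => Finset.range (m + 1)).filter
    fun α => (∑ j, α j) ≤ m

open scoped ContDiff

noncomputable def pDop {n : ℕ} (j : Fin n) (f : (Fin n → ℝ) → ℂ) : (Fin n → ℝ) → ℂ :=
  fun x => fderiv ℝ f x (Pi.single j 1)

lemma coe_pderiv_iter {n : ℕ} (j : Fin n) (k : ℕ) (g : SchwartzMap (Fin n → ℝ) ℂ) :
    ⇑((fun h => LineDeriv.lineDerivOpCLM ℝ (SchwartzMap (Fin n → ℝ) ℂ) (Pi.single j 1 : Fin n → ℝ) h)^[k] g) = (pDop j)^[k] ⇑g := by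
  induction k generalizing g with
  | zero => rfl
  | succ k ih =>
      rw [Function.iterate_succ_apply, Function.iterate_succ_apply, ih]
      congr 1

lemma schwartzMDeriv_coe {n : ℕ} (α : Fin n → ℕ) (f : SchwartzMap (Fin n → ℝ) ℂ) :
    ⇑(schwartzMDeriv α f) =
      (List.finRange n).foldr (fun j g => (pDop j)^[α j] g) ⇑f := by
  unfold schwartzMDeriv
  induction (List.finRange n) generalizing f with
  | nil => rfl
  | cons j l ih =>
      rw [List.foldr_cons, List.foldr_cons, coe_pderiv_iter, ih]

lemma iter_pderiv_sub {n : ℕ} (j : Fin n) (k : ℕ) (g h : SchwartzMap (Fin n → ℝ) ℂ) :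
    (fun h' => LineDeriv.lineDerivOpCLM ℝ (SchwartzMap (Fin n → ℝ) ℂ) (Pi.single j 1 : Fin n → ℝ) h')^[k] (g - h)
      = (fun h' => LineDeriv.lineDerivOpCLM ℝ (SchwartzMap (Fin n → ℝ) ℂ) (Pi.single j 1 : Fin n → ℝ) h')^[k] g
        - (fun h' => LineDeriv.lineDerivOpCLM ℝ (SchwartzMap (Fin n → ℝ) ℂ) (Pi.single j 1 : Fin n → ℝ) h')^[k] h := by
  induction k generalizing g h with
  | zero => rfl
  | succ k ih =>
      rw [Function.iterate_succ_apply, Function.iterate_succ_apply,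
        Function.iterate_succ_apply, map_sub, ih]

lemma iter_pderiv_add {n : ℕ} (j : Fin n) (k : ℕ) (g h : SchwartzMap (Fin n → ℝ) ℂ) :
    (fun h' => LineDeriv.lineDerivOpCLM ℝ (SchwartzMap (Fin n → ℝ) ℂ) (Pi.single j 1 : Fin n → ℝ) h')^[k] (g + h)
      = (fun h' => LineDeriv.lineDerivOpCLM ℝ (SchwartzMap (Fin n → ℝ) ℂ) (Pi.single j 1 : Fin n → ℝ) h')^[k] g
        + (fun h' => LineDeriv.lineDerivOpCLM ℝ (SchwartzMap (Fin n → ℝ) ℂ) (Pi.single j 1 : Fin n → ℝ) h')^[k] h := by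
  induction k generalizing g h with
  | zero => rfl
  | succ k ih =>
      rw [Function.iterate_succ_apply, Function.iterate_succ_apply,
        Function.iterate_succ_apply, map_add, ih]

lemma iter_pderiv_zero {n : ℕ} (j : Fin n) (k : ℕ) :
    (fun h' => LineDeriv.lineDerivOpCLM ℝ (SchwartzMap (Fin n → ℝ) ℂ) (Pi.single j 1 : Fin n → ℝ) h')^[k] (0 : SchwartzMap (Fin n → ℝ) ℂ)
      = 0 := by
  induction k with
  | zero => rfl
  | succ k ih => rw [Function.iterate_succ_apply, map_zero, ih]

lemma pderiv_csmul {n : ℕ} (j : Fin n) (c : ℂ) (g : SchwartzMap (Fin n → ℝ) ℂ) :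
    LineDeriv.lineDerivOpCLM ℝ (SchwartzMap (Fin n → ℝ) ℂ) (Pi.single j 1 : Fin n → ℝ) (c • g)
      = c • LineDeriv.lineDerivOpCLM ℝ (SchwartzMap (Fin n → ℝ) ℂ) (Pi.single j 1 : Fin n → ℝ) g := by
  ext x
  simp only [LineDeriv.lineDerivOpCLM_apply, SchwartzMap.lineDerivOp_apply_eq_fderiv, SchwartzMap.smul_apply]
  have : ⇑(c • g) = fun y => c • (g y) := rfl
  rw [this, fderiv_fun_const_smul g.differentiableAt c]
  rfl

lemma iter_pderiv_csmul {n : ℕ} (j : Fin n) (k : ℕ) (c : ℂ) (g : SchwartzMap (Fin n → ℝ) ℂ) :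
    (fun h' => LineDeriv.lineDerivOpCLM ℝ (SchwartzMap (Fin n → ℝ) ℂ) (Pi.single j 1 : Fin n → ℝ) h')^[k] (c • g)
      = c • (fun h' => LineDeriv.lineDerivOpCLM ℝ (SchwartzMap (Fin n → ℝ) ℂ) (Pi.single j 1 : Fin n → ℝ) h')^[k] g := by
  induction k generalizing g with
  | zero => rfl
  | succ k ih =>
      rw [Function.iterate_succ_apply, Function.iterate_succ_apply, pderiv_csmul, ih]

lemma schwartzMDeriv_sub {n : ℕ} (α : Fin n → ℕ) (f g : SchwartzMap (Fin n → ℝ) ℂ) :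
    schwartzMDeriv α (f - g) = schwartzMDeriv α f - schwartzMDeriv α g := by
  unfold schwartzMDeriv
  induction (List.finRange n) with
  | nil => rfl
  | cons j l ih => rw [List.foldr_cons, List.foldr_cons, List.foldr_cons, ih, iter_pderiv_sub]

lemma schwartzMDeriv_csmul {n : ℕ} (α : Fin n → ℕ) (c : ℂ) (f : SchwartzMap (Fin n → ℝ) ℂ) :
    schwartzMDeriv α (c • f) = c • schwartzMDeriv α f := by
  unfold schwartzMDeriv
  induction (List.finRange n) with
  | nil => rfl
  | cons j l ih => rw [List.foldr_cons, List.foldr_cons, ih, iter_pderiv_csmul]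

lemma schwartzMDeriv_zero {n : ℕ} (α : Fin n → ℕ) :
    schwartzMDeriv α (0 : SchwartzMap (Fin n → ℝ) ℂ) = 0 := by
  unfold schwartzMDeriv
  induction (List.finRange n) with
  | nil => rfl
  | cons j l ih => rw [List.foldr_cons, ih, iter_pderiv_zero]

lemma schwartzMDeriv_sum {n : ℕ} (α : Fin n → ℕ) {ι : Type*} (s : Finset ι)
    (F : ι → SchwartzMap (Fin n → ℝ) ℂ) :
    schwartzMDeriv α (∑ i ∈ s, F i) = ∑ i ∈ s, schwartzMDeriv α (F i) := by
  classical
  induction s using Finset.induction with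
  | empty => simpa using schwartzMDeriv_zero α
  | insert _ _ hx ih =>
      rw [Finset.sum_insert hx, Finset.sum_insert hx, ← ih]
      have : ∀ f g : SchwartzMap (Fin n → ℝ) ℂ,
          schwartzMDeriv α (f + g) = schwartzMDeriv α f + schwartzMDeriv α g := by
        intro f g
        unfold schwartzMDeriv
        induction (List.finRange n) with
        | nil => rfl
        | cons j l ih2 => rw [List.foldr_cons, List.foldr_cons, List.foldr_cons, ih2, iter_pderiv_add]
      exact this _ _
open scoped ContDiff

/-- The basic 1-D functions. -/
noncomputable def uFun (a : ℕ) : ℝ → ℂ := fun t => (t : ℂ) ^ a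

lemma uFun_contDiff (a : ℕ) : ContDiff ℝ ∞ (uFun a) := by
  have : uFun a = fun t : ℝ => (Complex.ofRealCLM t) ^ a := rfl
  rw [this]
  exact Complex.ofRealCLM.contDiff.pow a

lemma uFun_hasDerivAt (a : ℕ) (t : ℝ) :
    HasDerivAt (uFun a) ((a : ℂ) * (t : ℂ) ^ (a - 1)) t :=
  (hasDerivAt_pow a (t : ℂ)).comp_ofReal

lemma deriv_uFun (a : ℕ) : deriv (uFun a) = fun t => (a : ℂ) * uFun (a - 1) t := by
  funext t
  exact (uFun_hasDerivAt a t).deriv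

lemma iter_deriv_uFun (a k : ℕ) :
    deriv^[k] (uFun a) = fun t => (a.descFactorial k : ℂ) * uFun (a - k) t := by
  induction k with
  | zero => funext t; simp [Nat.descFactorial]
  | succ k ih =>
      rw [Function.iterate_succ_apply', ih]
      funext t
      rw [deriv_const_mul _ ((uFun_hasDerivAt (a - k) t).differentiableAt), deriv_uFun]
      rw [Nat.descFactorial_succ, Nat.cast_mul, Nat.sub_sub]
      ring

lemma prod_hasFDerivAt {n : ℕ} (g : Fin n → ℝ → ℂ) (hg : ∀ i, Differentiable ℝ (g i))
    (x : Fin n → ℝ) :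
    HasFDerivAt (fun y : Fin n → ℝ => ∏ i, g i (y i))
      (∑ i, (∏ k ∈ Finset.univ.erase i, g k (x k)) •
        (((1 : ℝ →L[ℝ] ℝ).smulRight (deriv (g i) (x i))).comp
          (ContinuousLinearMap.proj (R := ℝ) (φ := fun _ : Fin n => ℝ) i))) x := by
  exact HasFDerivAt.finset_prod (fun i _ =>
    ((hg i (x i)).hasDerivAt.hasFDerivAt).comp x (hasFDerivAt_apply i x))

lemma pDop_prod {n : ℕ} (g : Fin n → ℝ → ℂ) (hg : ∀ i, Differentiable ℝ (g i)) (j : Fin n) :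
    pDop j (fun y : Fin n → ℝ => ∏ i, g i (y i))
      = fun x => ∏ i, Function.update g j (deriv (g j)) i (x i) := by
  classical
  funext x
  have H := (prod_hasFDerivAt g hg x).fderiv
  unfold pDop
  rw [H, ContinuousLinearMap.sum_apply]
  have hterm : ∀ i : Fin n,
      ((∏ k ∈ Finset.univ.erase i, g k (x k)) •
        (((1 : ℝ →L[ℝ] ℝ).smulRight (deriv (g i) (x i))).comp
          (ContinuousLinearMap.proj (R := ℝ) (φ := fun _ : Fin n => ℝ) i)))
        (Pi.single j 1)
      = (∏ k ∈ Finset.univ.erase i, g k (x k)) •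
          ((Pi.single (M := fun _ : Fin n => ℝ) j 1 i) • deriv (g i) (x i)) := by
    intro i
    simp [ContinuousLinearMap.smul_apply, ContinuousLinearMap.comp_apply,
      ContinuousLinearMap.smulRight_apply, ContinuousLinearMap.proj_apply]
  rw [Finset.sum_congr rfl (fun i _ => hterm i)]
  rw [Finset.sum_eq_single j]
  · have : (fun i => Function.update g j (deriv (g j)) i (x i))
        = Function.update (fun i => g i (x i)) j (deriv (g j) (x j)) := by
      funext i
      by_cases h : i = j
      · subst h; simp
      · simp [Function.update_of_ne h]
    rw [this, Finset.prod_update_of_mem (Finset.mem_univ j),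
      Finset.sdiff_singleton_eq_erase]
    simp [smul_eq_mul, mul_comm]
  · intro i _ hij
    rw [Pi.single_eq_of_ne hij]
    simp
  · intro h; exact absurd (Finset.mem_univ j) h

lemma cd_diff {f : ℝ → ℂ} (h : ContDiff ℝ ∞ f) : Differentiable ℝ f :=
  h.differentiable (by simp)

lemma iter_pDop_prod {n : ℕ} (g : Fin n → ℝ → ℂ) (hg : ∀ i, ContDiff ℝ ∞ (g i)) (j : Fin n)
    (k : ℕ) :
    (pDop j)^[k] (fun y : Fin n → ℝ => ∏ i, g i (y i))
      = fun x => ∏ i, Function.update g j (deriv^[k] (g j)) i (x i) := by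
  classical
  induction k with
  | zero => simp [Function.update_eq_self]
  | succ k ih =>
      rw [Function.iterate_succ_apply', ih]
      have hg' : ∀ i, Differentiable ℝ (Function.update g j (deriv^[k] (g j)) i) := by
        intro i
        by_cases h : i = j
        · subst h
          rw [Function.update_self]
          exact cd_diff (ContDiff.iterate_deriv k (hg _))
        · rw [Function.update_of_ne h]
          exact cd_diff (hg i)
      rw [pDop_prod _ hg' j, Function.update_self, Function.update_idem]
      simp only [Function.iterate_succ_apply']

lemma foldr_pDop_prod {n : ℕ} (g : Fin n → ℝ → ℂ) (hg : ∀ i, ContDiff ℝ ∞ (g i))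
    (α : Fin n → ℕ) (l : List (Fin n)) (hl : l.Nodup) :
    l.foldr (fun j h => (pDop j)^[α j] h) (fun y : Fin n → ℝ => ∏ i, g i (y i))
      = fun x => ∏ i, (if i ∈ l then deriv^[α i] (g i) else g i) (x i) := by
  classical
  induction l with
  | nil => simp
  | cons j l ih =>
      have hjl : j ∉ l := (List.nodup_cons.mp hl).1
      have hl' := (List.nodup_cons.mp hl).2
      rw [List.foldr_cons, ih hl']
      have hsm : ∀ i, ContDiff ℝ ∞ (if i ∈ l then deriv^[α i] (g i) else g i) := by
        intro i
        by_cases h : i ∈ l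
        · rw [if_pos h]; exact ContDiff.iterate_deriv _ (hg i)
        · rw [if_neg h]; exact hg i
      rw [iter_pDop_prod _ hsm j]
      funext x
      apply Finset.prod_congr rfl
      intro i _
      by_cases h : i = j
      · subst h
        rw [Function.update_self, if_neg hjl, if_pos (List.mem_cons_self (a := i) (l := l))]
      · rw [Function.update_of_ne h]
        by_cases h2 : i ∈ l
        · rw [if_pos h2, if_pos (List.mem_cons_of_mem j h2)]
        · rw [if_neg h2, if_neg (by simp [List.mem_cons, h, h2])]

lemma mder_prod {n : ℕ} (g : Fin n → ℝ → ℂ) (hg : ∀ i, ContDiff ℝ ∞ (g i)) (α : Fin n → ℕ) :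
    (List.finRange n).foldr (fun j h => (pDop j)^[α j] h)
        (fun y : Fin n → ℝ => ∏ i, g i (y i))
      = fun x => ∏ i, deriv^[α i] (g i) (x i) := by
  rw [foldr_pDop_prod g hg α _ (List.nodup_finRange n)]
  funext x
  apply Finset.prod_congr rfl
  intro i _
  rw [if_pos (List.mem_finRange i)]

lemma pDop_eventuallyEq {n : ℕ} {f g : (Fin n → ℝ) → ℂ} {x : Fin n → ℝ}
    (h : f =ᶠ[𝓝 x] g) (j : Fin n) : pDop j f =ᶠ[𝓝 x] pDop j g := by
  have := h.fderiv (𝕜 := ℝ)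
  filter_upwards [this] with y hy
  unfold pDop
  rw [hy]

lemma iter_pDop_eventuallyEq {n : ℕ} {f g : (Fin n → ℝ) → ℂ} {x : Fin n → ℝ}
    (h : f =ᶠ[𝓝 x] g) (j : Fin n) (k : ℕ) :
    (pDop j)^[k] f =ᶠ[𝓝 x] (pDop j)^[k] g := by
  induction k generalizing f g with
  | zero => exact h
  | succ k ih => exact ih (pDop_eventuallyEq h j)

lemma foldr_pDop_eventuallyEq {n : ℕ} {f g : (Fin n → ℝ) → ℂ} {x : Fin n → ℝ}
    (h : f =ᶠ[𝓝 x] g) (α : Fin n → ℕ) (l : List (Fin n)) :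
    l.foldr (fun j h' => (pDop j)^[α j] h') f =ᶠ[𝓝 x] l.foldr (fun j h' => (pDop j)^[α j] h') g := by
  induction l with
  | nil => exact h
  | cons j l ih => exact iter_pDop_eventuallyEq ih j (α j)

lemma iter_deriv_const_mul (c : ℂ) (f : ℝ → ℂ) (hf : ContDiff ℝ ∞ f) (k : ℕ) :
    deriv^[k] (fun t => c * f t) = fun t => c * deriv^[k] f t := by
  induction k with
  | zero => rfl
  | succ k ih =>
      rw [Function.iterate_succ_apply', Function.iterate_succ_apply', ih]
      funext t
      exact deriv_const_mul c ((cd_diff (ContDiff.iterate_deriv k hf)) t)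

lemma eval0_factor (a b : ℕ) :
    deriv^[b] (fun t => (((Nat.factorial a) : ℂ))⁻¹ * uFun a t) 0 = if b = a then 1 else 0 := by
  rw [iter_deriv_const_mul _ _ (uFun_contDiff a), iter_deriv_uFun]
  have hu : uFun (a - b) 0 = if b < a then 0 else 1 := by
    unfold uFun
    rcases lt_or_ge b a with h | h
    · rw [if_pos h]
      rw [Complex.ofReal_zero, zero_pow (by omega)]
    · rw [if_neg (not_lt_of_ge h), Nat.sub_eq_zero_of_le h, pow_zero]
  beta_reduce
  rw [hu]
  rcases lt_trichotomy b a with h | h | h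
  · simp [if_pos h, if_neg (Nat.ne_of_lt h)]
  · subst h
    simp [Nat.descFactorial_self, if_neg (lt_irrefl b)]
    rw [inv_mul_cancel₀]
    exact_mod_cast Nat.factorial_ne_zero b
  · rw [Nat.descFactorial_eq_zero_iff_lt.mpr h]
    simp [if_neg (Nat.ne_of_gt h)]

/-- The normalized monomial factors. -/
noncomputable def gFun {n : ℕ} (α : Fin n → ℕ) : Fin n → ℝ → ℂ :=
  fun i => fun t => ((Nat.factorial (α i) : ℂ))⁻¹ * uFun (α i) t

lemma gFun_contDiff {n : ℕ} (α : Fin n → ℕ) (i : Fin n) : ContDiff ℝ ∞ (gFun α i) :=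
  contDiff_const.mul (uFun_contDiff (α i))

lemma mder_P_eval {n : ℕ} (α β : Fin n → ℕ) :
    (List.finRange n).foldr (fun j h => (pDop j)^[β j] h)
      (fun y : Fin n → ℝ => ∏ i, gFun α i (y i)) 0
      = if β = α then 1 else 0 := by
  classical
  rw [mder_prod (gFun α) (gFun_contDiff α) β]
  beta_reduce
  have : ∀ i : Fin n, deriv^[β i] (gFun α i) ((0 : Fin n → ℝ) i) = if β i = α i then 1 else 0 := by
    intro i
    have := eval0_factor (α i) (β i)
    exact this
  rw [Finset.prod_congr rfl fun i _ => this i, Finset.prod_boole]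
  by_cases h : β = α
  · rw [if_pos h, if_pos (fun i _ => congrFun h i)]
  · rw [if_neg h, if_neg]
    intro hall
    exact h (funext fun i => hall i (Finset.mem_univ i))

/-- Schwartz map from a smooth compactly supported function. -/
noncomputable def schwartzOfCompactSupport {n : ℕ} (f : (Fin n → ℝ) → ℂ)
    (hsm : ContDiff ℝ ∞ f) (hcs : HasCompactSupport f) : SchwartzMap (Fin n → ℝ) ℂ where
  toFun := f
  smooth' := hsm
  decay' := by
    intro k m
    have h1 : Continuous fun x : Fin n → ℝ => ‖x‖ ^ k * ‖iteratedFDeriv ℝ m f x‖ :=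
      (continuous_norm.pow k).mul
        ((hsm.continuous_iteratedFDeriv (by exact_mod_cast le_top)).norm)
    have h2 : HasCompactSupport fun x : Fin n → ℝ => ‖x‖ ^ k * ‖iteratedFDeriv ℝ m f x‖ := by
      have hn : HasCompactSupport fun x => ‖iteratedFDeriv ℝ m f x‖ :=
        (hcs.iteratedFDeriv m).comp_left norm_zero
      exact hn.mul_left
    obtain ⟨C, hC⟩ := h1.bounded_above_of_compact_support h2
    exact ⟨C, fun x => by simpa using hC x⟩

noncomputable def bumpF (n : ℕ) : ContDiffBump (0 : Fin n → ℝ) :=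
  ⟨1, 2, one_pos, one_lt_two⟩

noncomputable def eSch {n : ℕ} (α : Fin n → ℕ) : SchwartzMap (Fin n → ℝ) ℂ :=
  schwartzOfCompactSupport (fun x => (bumpF n) x • ∏ i, gFun α i (x i))
    (((bumpF n).contDiff).smul (contDiff_prod (fun i _ => (gFun_contDiff α i).comp (contDiff_apply ℝ ℝ i))))
    ((bumpF n).hasCompactSupport.smul_right)

lemma eSch_coe_eventually {n : ℕ} (α : Fin n → ℕ) :
    ⇑(eSch α) =ᶠ[𝓝 (0 : Fin n → ℝ)] fun y => ∏ i, gFun α i (y i) := by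
  filter_upwards [Metric.ball_mem_nhds (0 : Fin n → ℝ) one_pos] with x hx
  have hc : (eSch α) x = (bumpF n) x • ∏ i, gFun α i (x i) := rfl
  rw [hc]
  have hx1 : x ∈ Metric.closedBall (0 : Fin n → ℝ) (bumpF n).rIn :=
    Metric.ball_subset_closedBall hx
  rw [(bumpF n).one_of_mem_closedBall hx1, one_smul]

lemma eSch_mderiv0 {n : ℕ} (α β : Fin n → ℕ) :
    schwartzMDeriv β (eSch α) 0 = if β = α then 1 else 0 := by
  have h1 : (⇑(schwartzMDeriv β (eSch α))) 0
      = ((List.finRange n).foldr (fun j g => (pDop j)^[β j] g) ⇑(eSch α)) 0 := by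
    rw [schwartzMDeriv_coe]
  have h2 := (foldr_pDop_eventuallyEq (eSch_coe_eventually α) β (List.finRange n)).eq_of_nhds
  rw [h1, h2, mder_P_eval]

lemma tendsto_sub_partial_div_pow {h : ℂ → ℂ} {p : FormalMultilinearSeries ℂ ℂ ℂ}
    (hp : HasFPowerSeriesAt h p 0) (m : ℕ) :
    Filter.Tendsto (fun ζ : ℂ => (h ζ - ∑ k ∈ Finset.range m, p.coeff k * ζ ^ k) / ζ ^ m)
      (𝓝[≠] (0:ℂ)) (𝓝 (p.coeff m)) := by
  have hO := hp.isBigO_sub_partialSum_pow (m+1)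
  have hps : ∀ y : ℂ, p.partialSum (m+1) y = ∑ k ∈ Finset.range (m+1), p.coeff k * y ^ k := by
    intro y
    unfold FormalMultilinearSeries.partialSum
    refine Finset.sum_congr rfl fun k _ => ?_
    rw [FormalMultilinearSeries.apply_eq_pow_smul_coeff, smul_eq_mul, mul_comm]
  have hO' : (fun y : ℂ => h y - ∑ k ∈ Finset.range (m+1), p.coeff k * y ^ k)
      =O[𝓝 (0:ℂ)] fun y => ‖y‖ ^ (m+1) := by
    have : (fun y : ℂ => h (0 + y) - p.partialSum (m+1) y)
        = fun y : ℂ => h y - ∑ k ∈ Finset.range (m+1), p.coeff k * y ^ k := by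
      funext y; rw [zero_add, hps]
    rwa [this] at hO
  have key : Filter.Tendsto
      (fun ζ : ℂ => (h ζ - ∑ k ∈ Finset.range (m+1), p.coeff k * ζ ^ k) / ζ ^ m)
      (𝓝[≠] (0:ℂ)) (𝓝 0) := by
    have hOO : (fun ζ : ℂ => (h ζ - ∑ k ∈ Finset.range (m+1), p.coeff k * ζ ^ k) / ζ ^ m)
        =O[𝓝[≠] (0:ℂ)] fun ζ => ζ := by
      rw [Asymptotics.isBigO_iff] at hO' ⊢
      obtain ⟨C, hC⟩ := hO'
      refine ⟨C, ?_⟩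
      filter_upwards [self_mem_nhdsWithin, nhdsWithin_le_nhds hC] with ζ hζ hCζ
      have hζ0 : ζ ≠ (0:ℂ) := hζ
      have hn : (0:ℝ) < ‖ζ‖ ^ m := pow_pos (norm_pos_iff.mpr hζ0) m
      rw [norm_div, norm_pow, div_le_iff₀ hn]
      calc ‖h ζ - ∑ k ∈ Finset.range (m+1), p.coeff k * ζ ^ k‖
          ≤ C * ‖‖ζ‖ ^ (m+1)‖ := hCζ
        _ = C * ‖ζ‖ * ‖ζ‖ ^ m := by
            rw [Real.norm_eq_abs, abs_of_nonneg (by positivity), pow_succ]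
            ring
    have hz : Filter.Tendsto (fun ζ : ℂ => ζ) (𝓝[≠] (0:ℂ)) (𝓝 0) :=
      tendsto_id.mono_left nhdsWithin_le_nhds
    exact hOO.trans_tendsto hz
  have heq : (fun ζ : ℂ => (h ζ - ∑ k ∈ Finset.range (m+1), p.coeff k * ζ ^ k) / ζ ^ m
        + p.coeff m)
      =ᶠ[𝓝[≠] (0:ℂ)]
      fun ζ : ℂ => (h ζ - ∑ k ∈ Finset.range m, p.coeff k * ζ ^ k) / ζ ^ m := by
    filter_upwards [self_mem_nhdsWithin] with ζ hζ
    have hζ0 : (ζ:ℂ) ^ m ≠ 0 := pow_ne_zero m hζ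
    have hsplit : h ζ - ∑ k ∈ Finset.range m, p.coeff k * ζ ^ k
        = (h ζ - ∑ k ∈ Finset.range (m+1), p.coeff k * ζ ^ k) + p.coeff m * ζ ^ m := by
      rw [Finset.sum_range_succ]; ring
    rw [hsplit, add_div, mul_div_assoc, div_self hζ0, mul_one]
  have := key.add (tendsto_const_nhds (x := p.coeff m))
  rw [zero_add] at this
  exact this.congr' heq

lemma exists_analyticAt_of_tendsto {F : ℂ → ℂ} {L : ℂ}
    (hd : ∀ᶠ z in 𝓝[≠] (0:ℂ), DifferentiableAt ℂ F z)
    (ht : Filter.Tendsto F (𝓝[≠] (0:ℂ)) (𝓝 L)) :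
    ∃ g : ℂ → ℂ, AnalyticAt ℂ g 0 ∧ ∀ z : ℂ, z ≠ 0 → g z = F z := by
  refine ⟨Function.update F 0 L, ?_, fun z hz => Function.update_of_ne hz _ _⟩
  apply Complex.analyticAt_of_differentiable_on_punctured_nhds_of_continuousAt
  · filter_upwards [hd, self_mem_nhdsWithin] with z hz hz0
    have : Function.update F 0 L =ᶠ[𝓝 z] F := by
      filter_upwards [isOpen_ne.mem_nhds (by exact hz0 : z ≠ 0)] with w hw
      exact Function.update_of_ne hw _ _
    exact hz.congr_of_eventuallyEq this
  · exact continuousAt_update_same.2 ht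

lemma sum_Icc_div_eq {m : ℕ} (c : ℕ → ℂ) {ζ : ℂ} (hζ : ζ ≠ 0) :
    ∑ j ∈ Finset.Icc 1 m, c (m - j) / ζ ^ j
      = (∑ k ∈ Finset.range m, c k * ζ ^ k) / ζ ^ m := by
  have hterm : ∀ j ∈ Finset.Icc 1 m,
      c (m - j) / ζ ^ j = c (m - j) * ζ ^ (m - j) / ζ ^ m := by
    intro j hj
    rw [Finset.mem_Icc] at hj
    have hm : ζ ^ m = ζ ^ j * ζ ^ (m - j) := by
      rw [← pow_add]; congr 1; omega
    rw [hm, ← mul_div_mul_right (c (m-j)) (ζ ^ j) (pow_ne_zero (m - j) hζ)]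
  rw [Finset.sum_congr rfl hterm, ← Finset.sum_div]
  congr 1
  refine Finset.sum_nbij' (fun j => m - j) (fun k => m - k) ?_ ?_ ?_ ?_ ?_
  · intro j hj; rw [Finset.mem_Icc] at hj
    show m - j ∈ Finset.range m
    rw [Finset.mem_range]; omega
  · intro k hk; rw [Finset.mem_range] at hk
    show m - k ∈ Finset.Icc 1 m
    rw [Finset.mem_Icc]; omega
  · intro j hj; rw [Finset.mem_Icc] at hj
    show m - (m - j) = j
    omega
  · intro k hk; rw [Finset.mem_range] at hk
    show m - (m - k) = k
    omega
  · intro j hj; rfl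

lemma schwartz_sum_apply {n : ℕ} {ι : Type*} (s : Finset ι)
    (F : ι → SchwartzMap (Fin n → ℝ) ℂ) (x : Fin n → ℝ) :
    (∑ i ∈ s, F i) x = ∑ i ∈ s, F i x := by
  classical
  induction s using Finset.induction with
  | empty => simp
  | insert _ _ hx ih => rw [Finset.sum_insert hx, Finset.sum_insert hx, SchwartzMap.add_apply, ih]


/-- **Locality of the principal part of an analytic regularization.** Let
`{T ζ}` be a family of tempered distributions on `ℝⁿ`, analytic in
`ζ ∈ Ω \ {0}` with a pole of finite order at `0` for each test function, and
such that `lim_{ζ→0} ⟨T ζ, g⟩` exists for every Schwartz `g` vanishing to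
order `λ` at the origin.  Then there are `m`, coefficient functionals `a j`
and constants `c j α` such that for each `f` the function
`ζ ↦ ⟨T ζ, f⟩ − Σ_{j=1}^m (a j f)·ζ^{−j}` extends analytically to `0`, and
each Laurent coefficient `a j` of a strictly negative power is a finite
linear combination `Σ_{|α| ≤ λ} c j α · (−1)^{|α|} ∂^α f(0)` of derivatives of
the Dirac distribution at the origin. -/
theorem analytic_regularization_principal_part_local (n lam : ℕ)
    (Ω : Set ℂ) (hΩ : IsOpen Ω) (h0 : (0 : ℂ) ∈ Ω)
    (T : ℂ → (SchwartzMap (Fin n → ℝ) ℂ →L[ℂ] ℂ))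
    (hanalytic : ∀ f : SchwartzMap (Fin n → ℝ) ℂ,
      AnalyticOnNhd ℂ (fun ζ => T ζ f) (Ω \ {0}))
    (hpole : ∀ f : SchwartzMap (Fin n → ℝ) ℂ,
      ∃ (m : ℕ) (g : ℂ → ℂ), AnalyticAt ℂ g 0 ∧
        ∀ ζ ∈ Ω \ {0}, T ζ f = g ζ / ζ ^ m)
    (hlimit : ∀ g : SchwartzMap (Fin n → ℝ) ℂ,
      (∀ α ∈ multiIndices n lam, schwartzMDeriv α g 0 = 0) →
      ∃ L : ℂ, Tendsto (fun ζ : ℂ => T ζ g) (nhdsWithin 0 {0}ᶜ) (nhds L)) :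
    ∃ (m : ℕ) (a : ℕ → SchwartzMap (Fin n → ℝ) ℂ → ℂ)
      (c : ℕ → (Fin n → ℕ) → ℂ),
      (∀ f : SchwartzMap (Fin n → ℝ) ℂ,
        ∃ g : ℂ → ℂ, AnalyticAt ℂ g 0 ∧
          ∀ ζ ∈ Ω \ {0},
            g ζ = T ζ f - ∑ j ∈ Finset.Icc 1 m, a j f / ζ ^ j) ∧
      (∀ j ∈ Finset.Icc 1 m, ∀ f : SchwartzMap (Fin n → ℝ) ℂ,
        a j f = ∑ α ∈ multiIndices n lam,
          c j α * ((-1 : ℂ) ^ (∑ i, α i) * schwartzMDeriv α f 0)) := by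
  classical
  choose mm hh hhA hhEq using hpole
  set E := multiIndices n lam with hE
  set m : ℕ := E.sup (fun α => mm (eSch α)) with hm
  set H : (Fin n → ℕ) → ℂ → ℂ :=
    fun α ζ => hh (eSch α) ζ * ζ ^ (m - mm (eSch α)) with hH
  have hHA : ∀ α : Fin n → ℕ, AnalyticAt ℂ (H α) 0 := by
    intro α
    exact (hhA (eSch α)).mul ((analyticAt_id).pow _)
  choose q hq using hHA
  have hHrel : ∀ α ∈ E, ∀ ζ ∈ Ω \ {0}, T ζ (eSch α) = H α ζ / ζ ^ m := by
    intro α hα ζ hζ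
    have hζ0 : ζ ≠ 0 := hζ.2
    have hle : mm (eSch α) ≤ m := Finset.le_sup (f := fun α => mm (eSch α)) hα
    rw [hhEq (eSch α) ζ hζ]
    have hpow : ζ ^ m = ζ ^ (mm (eSch α)) * ζ ^ (m - mm (eSch α)) := by
      rw [← pow_add]; congr 1; omega
    show hh (eSch α) ζ / ζ ^ (mm (eSch α))
      = hh (eSch α) ζ * ζ ^ (m - mm (eSch α)) / ζ ^ m
    rw [hpow, mul_div_mul_right _ _ (pow_ne_zero _ hζ0)]
  refine ⟨m, fun j f => ∑ α ∈ E, (schwartzMDeriv α f 0) * (q α).coeff (m - j),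
    fun j α => (-1:ℂ) ^ (∑ i, α i) * (q α).coeff (m - j), ?_, ?_⟩
  · intro f
    set d : (Fin n → ℕ) → ℂ := fun α => schwartzMDeriv α f 0 with hd
    set gf : SchwartzMap (Fin n → ℝ) ℂ := f - ∑ α ∈ E, d α • eSch α with hgf
    have hvanish : ∀ β ∈ E, schwartzMDeriv β gf 0 = 0 := by
      intro β hβ
      rw [hgf, schwartzMDeriv_sub, SchwartzMap.sub_apply, schwartzMDeriv_sum,
        schwartz_sum_apply]
      have hterm : ∀ α ∈ E, schwartzMDeriv β (d α • eSch α) 0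
          = if β = α then d α else 0 := by
        intro α _
        rw [schwartzMDeriv_csmul, SchwartzMap.smul_apply, eSch_mderiv0 α β,
          smul_eq_mul, mul_ite, mul_one, mul_zero]
      rw [Finset.sum_congr rfl hterm, Finset.sum_ite_eq E β d, if_pos hβ]
      exact sub_self _
    obtain ⟨L, hL⟩ := hlimit gf hvanish
    have hfdecomp : ∀ ζ : ℂ, T ζ f = T ζ gf + ∑ α ∈ E, d α * T ζ (eSch α) := by
      intro ζ
      have hfd : f = gf + ∑ α ∈ E, d α • eSch α := by
        rw [hgf]; abel
      conv_lhs => rw [hfd]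
      rw [map_add, map_sum]
      congr 1
      exact Finset.sum_congr rfl fun α _ => by rw [map_smul, smul_eq_mul]
    have hmem : Ω \ {0} ∈ 𝓝[≠] (0:ℂ) := by
      rw [Set.diff_eq]
      exact Filter.inter_mem (mem_nhdsWithin_of_mem_nhds (hΩ.mem_nhds h0))
        self_mem_nhdsWithin
    have htend : Tendsto (fun ζ : ℂ => T ζ f
          - ∑ j ∈ Finset.Icc 1 m, (∑ α ∈ E, d α * (q α).coeff (m - j)) / ζ ^ j)
        (𝓝[≠] (0:ℂ)) (𝓝 (L + ∑ α ∈ E, d α * (q α).coeff m)) := by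
      have hG : Tendsto (fun ζ : ℂ => T ζ gf
            + ∑ α ∈ E, d α * ((H α ζ - ∑ k ∈ Finset.range m, (q α).coeff k * ζ ^ k) / ζ ^ m))
          (𝓝[≠] (0:ℂ)) (𝓝 (L + ∑ α ∈ E, d α * (q α).coeff m)) := by
        refine hL.add (tendsto_finset_sum _ fun α _ => ?_)
        exact (tendsto_sub_partial_div_pow (hq α) m).const_mul (d α)
      refine hG.congr' ?_
      filter_upwards [hmem] with ζ hζ
      have hζ0 : ζ ≠ 0 := hζ.2
      rw [hfdecomp ζ]
      have h2 : ∑ j ∈ Finset.Icc 1 m, (∑ α ∈ E, d α * (q α).coeff (m - j)) / ζ ^ j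
          = ∑ α ∈ E, d α * ((∑ k ∈ Finset.range m, (q α).coeff k * ζ ^ k) / ζ ^ m) := by
        have hswap : ∀ j ∈ Finset.Icc 1 m,
            (∑ α ∈ E, d α * (q α).coeff (m - j)) / ζ ^ j
              = ∑ α ∈ E, d α * ((q α).coeff (m - j) / ζ ^ j) := by
          intro j _
          rw [Finset.sum_div]
          exact Finset.sum_congr rfl fun α _ => by rw [mul_div_assoc]
        rw [Finset.sum_congr rfl hswap, Finset.sum_comm]
        refine Finset.sum_congr rfl fun α _ => ?_
        rw [← Finset.mul_sum, sum_Icc_div_eq _ hζ0]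
      have h1 : ∑ α ∈ E, d α * T ζ (eSch α) = ∑ α ∈ E, d α * (H α ζ / ζ ^ m) :=
        Finset.sum_congr rfl fun α hα => by rw [hHrel α hα ζ hζ]
      rw [h1, h2, add_sub_assoc, ← Finset.sum_sub_distrib]
      congr 1
      refine Finset.sum_congr rfl fun α _ => ?_
      rw [sub_div, mul_sub]
    have hdiff : ∀ᶠ z in 𝓝[≠] (0:ℂ), DifferentiableAt ℂ (fun ζ : ℂ => T ζ f
        - ∑ j ∈ Finset.Icc 1 m, (∑ α ∈ E, d α * (q α).coeff (m - j)) / ζ ^ j) z := by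
      filter_upwards [hmem] with z hz
      have hz0 : z ≠ 0 := hz.2
      refine ((hanalytic f) z hz).differentiableAt.sub ?_
      refine DifferentiableAt.fun_sum fun j _ => ?_
      exact (differentiableAt_const _).div (differentiableAt_pow j) (pow_ne_zero j hz0)
    obtain ⟨g, hg, hgeq⟩ := exists_analyticAt_of_tendsto hdiff htend
    exact ⟨g, hg, fun ζ hζ => hgeq ζ hζ.2⟩
  · intro j _ f
    refine Finset.sum_congr rfl fun α _ => ?_
    have hs : (-1:ℂ) ^ (∑ i, α i) * (-1) ^ (∑ i, α i) = 1 := by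
      rw [← pow_add]
      exact Even.neg_one_pow (Even.add_self _)
    calc schwartzMDeriv α f 0 * (q α).coeff (m - j)
        = ((-1:ℂ) ^ (∑ i, α i) * (-1) ^ (∑ i, α i))
            * (schwartzMDeriv α f 0 * (q α).coeff (m - j)) := by rw [hs, one_mul]
      _ = ((-1:ℂ) ^ (∑ i, α i) * (q α).coeff (m - j))
            * ((-1 : ℂ) ^ (∑ i, α i) * schwartzMDeriv α f 0) := by ring
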